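/- Let γ be a self-avoiding circuit in ℤ² surrounding the origin (a Jordan curve in the plane with 0 in its interior), and let P be a self-avoiding lattice path with both endpoints on γ and all interior vertices in the exterior of γ, such that P, together with the subpath Q of γ between the endpoints of P that it 'detours', forms a circuit P ∪ Q not surrounding the origin. Then (γ \ Q) ∪ P is a circuit surrounding the origin, and moreover Q minus its endpoints lies in the interior of the Jordan curve P ∪ (γ \ Q). -/

import Mathlib

open Set

section ThetaCurveMachinery
open Complex

/-- `f` has a continuous logarithm on the whole space `X`. -/
def HasLogF {X : Type} [TopologicalSpace X] (f : X → ℂ) : Prop :=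
  ∃ g : X → ℂ, Continuous g ∧ ∀ x, Complex.exp (g x) = f x

lemma hasLogF_of_close {X : Type} [TopologicalSpace X] {f g : X → ℂ}
    (hf : Continuous f) (hg : Continuous g) (hgne : ∀ x, g x ≠ 0)
    (hclose : ∀ x, ‖f x - g x‖ < ‖g x‖) (hlog : HasLogF g) : HasLogF f := by
  obtain ⟨ℓ, hℓc, hℓ⟩ := hlog
  have hfne : ∀ x, f x ≠ 0 := by
    intro x hx
    have := hclose x
    rw [hx, zero_sub, norm_neg] at this
    exact lt_irrefl _ this
  have hq : ∀ x, f x / g x ∈ Metric.ball (1 : ℂ) 1 := by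
    intro x
    rw [Metric.mem_ball, dist_eq_norm]
    rw [div_sub_one (hgne x), norm_div]
    exact (div_lt_one (norm_pos_iff.mpr (hgne x))).mpr (hclose x)
  refine ⟨fun x => ℓ x + Complex.log (f x / g x), ?_, ?_⟩
  · apply hℓc.add
    rw [continuous_iff_continuousAt]
    intro x
    exact ContinuousAt.clog ((hf.continuousAt).div (hg.continuousAt) (hgne x))
      (Complex.ball_one_subset_slitPlane (hq x))
  · intro x
    rw [Complex.exp_add, hℓ, Complex.exp_log (div_ne_zero (hfne x) (hgne x))]
    rw [mul_comm, div_mul_cancel₀ _ (hgne x)]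

/-- Homotopy invariance of having a continuous logarithm, over a compact base. -/
lemma hasLogF_homotopy {X : Type} [TopologicalSpace X] [CompactSpace X]
    (H : unitInterval × X → ℂ) (Hc : Continuous H) (Hne : ∀ p, H p ≠ 0)
    (h0 : HasLogF (fun x => H (0, x))) : HasLogF (fun x => H (1, x)) := by
  cases isEmpty_or_nonempty X with
  | inl h => exact ⟨fun _ => 0, continuous_const, fun x => (IsEmpty.false x).elim⟩
  | inr h =>
    obtain ⟨p₀, -, hp₀⟩ := isCompact_univ.exists_isMinOn (univ_nonempty)
      ((Hc.norm).continuousOn)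
    set m : ℝ := ‖H p₀‖ with hm
    have hmpos : 0 < m := norm_pos_iff.mpr (Hne p₀)
    have hmle : ∀ p, m ≤ ‖H p‖ := fun p => hp₀ (mem_univ p)
    set S : Set unitInterval := {t | HasLogF (fun x => H (t, x))} with hS
    have key : ∀ t₀ : unitInterval, ∃ U : Set unitInterval, IsOpen U ∧ t₀ ∈ U ∧
        ∀ t ∈ U, (t ∈ S ↔ t₀ ∈ S) := by
      intro t₀
      have hWopen : IsOpen {p : unitInterval × X | ‖H p - H (t₀, p.2)‖ < m} := by
        apply isOpen_lt _ continuous_const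
        exact (Hc.sub (Hc.comp (continuous_const.prodMk continuous_snd))).norm
      have hsub : {t₀} ×ˢ (univ : Set X) ⊆ {p : unitInterval × X | ‖H p - H (t₀, p.2)‖ < m} := by
        rintro ⟨t, x⟩ ⟨rfl, -⟩
        simpa using hmpos
      obtain ⟨U, V, hU, hV, htU, hVuniv, hUV⟩ :=
        generalized_tube_lemma isCompact_singleton isCompact_univ hWopen hsub
      refine ⟨U, hU, htU rfl, ?_⟩
      intro t htU'
      have hclose : ∀ x, ‖H (t, x) - H (t₀, x)‖ < m := by
        intro x
        exact hUV (mk_mem_prod htU' (hVuniv (mem_univ x)))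
      have hcont : ∀ s : unitInterval, Continuous (fun x => H (s, x)) :=
        fun s => Hc.comp (continuous_const.prodMk continuous_id)
      constructor
      · intro ht
        exact hasLogF_of_close (hcont t₀) (hcont t) (fun x => Hne _)
          (fun x => by
            have h1 := hclose x
            rw [← norm_neg, neg_sub] at h1
            exact lt_of_lt_of_le h1 (hmle (t, x))) ht
      · intro ht₀
        exact hasLogF_of_close (hcont t) (hcont t₀) (fun x => Hne _)
          (fun x => lt_of_lt_of_le (hclose x) (hmle (t₀, x))) ht₀
    have hSopen : IsOpen S := by
      rw [isOpen_iff_forall_mem_open]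
      intro t ht
      obtain ⟨U, hU, htU, hiff⟩ := key t
      exact ⟨U, fun s hs => (hiff s hs).mpr ht, hU, htU⟩
    have hScl : IsClosed S := by
      rw [← isOpen_compl_iff, isOpen_iff_forall_mem_open]
      intro t ht
      obtain ⟨U, hU, htU, hiff⟩ := key t
      exact ⟨U, fun s hs hsS => ht ((hiff s hs).mp hsS), hU, htU⟩
    have : S = univ := (IsClopen.eq_univ ⟨hScl, hSopen⟩ ⟨0, h0⟩)
    have h1 : (1 : unitInterval) ∈ S := this ▸ mem_univ _
    exact h1

/-- `f` has a continuous logarithm on the set `S ⊆ ℂ`. -/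
def HasLogOn (f : ℂ → ℂ) (S : Set ℂ) : Prop :=
  ∃ g : ℂ → ℂ, ContinuousOn g S ∧ ∀ x ∈ S, Complex.exp (g x) = f x

lemma hasLogOn_of_hasLogF {f : ℂ → ℂ} {S : Set ℂ}
    (h : HasLogF (fun x : S => f (x : ℂ))) : HasLogOn f S := by
  obtain ⟨g, hgc, hg⟩ := h
  classical
  refine ⟨fun y => if hy : y ∈ S then g ⟨y, hy⟩ else 0, ?_, ?_⟩
  · rw [continuousOn_iff_continuous_restrict]
    convert hgc using 1
    funext x
    simp [Set.restrict_apply, dif_pos x.2]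
  · intro x hx
    simpa [dif_pos hx] using hg ⟨x, hx⟩

lemma exists_exp_eq {c : ℂ} (hc : c ≠ 0) : ∃ w : ℂ, Complex.exp w = c := by
  have : c ∈ Set.range Complex.exp := by rw [Complex.range_exp]; exact hc
  exact this

/-- If `z` lies in an unbounded component of the complement of a compact `K`,
then `x ↦ x - z` has a continuous logarithm on `K`. -/
lemma hasLogOn_sub_of_unbounded {K : Set ℂ} (hK : IsCompact K) {z : ℂ} (hz : z ∉ K)
    (hub : ¬ Bornology.IsBounded (connectedComponentIn Kᶜ z)) :
    HasLogOn (fun x => x - z) K := by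
  haveI : CompactSpace K := isCompact_iff_compactSpace.mp hK
  set C := connectedComponentIn Kᶜ z with hC
  have hCopen : IsOpen C := hK.isClosed.isOpen_compl.connectedComponentIn
  have hzc : z ∈ Kᶜ := hz
  have hCconn : IsConnected C := isConnected_connectedComponentIn_iff.mpr hzc
  have hCpath : IsPathConnected C := hCopen.isConnected_iff_isPathConnected.mp hCconn
  -- a radius containing K
  obtain ⟨R₁, hR₁⟩ := hK.isBounded.subset_closedBall (0 : ℂ)
  set R₀ : ℝ := max R₁ 0 with hR₀def
  have hR₀ : ∀ x ∈ K, ‖x‖ ≤ R₀ := by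
    intro x hx
    have := hR₁ hx
    rw [Metric.mem_closedBall, dist_zero_right] at this
    exact le_trans this (le_max_left _ _)
  have hR₀nn : (0:ℝ) ≤ R₀ := le_max_right _ _
  -- a far point in C
  obtain ⟨u, huC, hu⟩ : ∃ u ∈ C, R₀ < ‖u‖ := by
    by_contra hcon
    push_neg at hcon
    exact hub ((Metric.isBounded_closedBall (x := (0:ℂ)) (r := R₀)).subset
      (fun x hx => by
        rw [Metric.mem_closedBall, dist_zero_right]; exact hcon x hx))
  have hzC : z ∈ C := mem_connectedComponentIn hzc
  obtain ⟨γ, hγ⟩ := hCpath.joinedIn u huC z hzC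
  have hune : (-u : ℂ) ≠ 0 := by
    rw [neg_ne_zero, ← norm_pos_iff]
    linarith
  obtain ⟨w, hw⟩ := exists_exp_eq hune
  -- the homotopy
  set H : unitInterval × K → ℂ := fun p => (p.2 : ℂ) - γ p.1 with hH
  have Hc : Continuous H :=
    (continuous_subtype_val.comp continuous_snd).sub (γ.continuous.comp continuous_fst)
  have Hne : ∀ p, H p ≠ 0 := by
    rintro ⟨t, x⟩ h
    rw [hH, sub_eq_zero] at h
    have hxC : (x : ℂ) ∈ C := by rw [h]; exact hγ t
    exact (connectedComponentIn_subset Kᶜ z hxC) x.2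
  -- log at time 0 : x - u
  have hq : ∀ x : K, ((x : ℂ) - u) / (-u) ∈ Metric.ball (1:ℂ) 1 := by
    intro x
    rw [Metric.mem_ball, dist_eq_norm, div_sub_one hune]
    have hnum : (x : ℂ) - u - -u = (x : ℂ) := by ring
    rw [hnum, norm_div, norm_neg]
    rw [div_lt_one (by linarith)]
    exact lt_of_le_of_lt (hR₀ _ x.2) hu
  have hqne : ∀ x : K, ((x : ℂ) - u) / (-u) ≠ 0 := by
    intro x h
    have := hq x
    rw [h] at this
    simp at this
  have h0 : HasLogF (fun x : K => H (0, x)) := by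
    refine ⟨fun x => Complex.log (((x : ℂ) - u) / (-u)) + w, ?_, ?_⟩
    · rw [continuous_iff_continuousAt]
      intro x
      apply ContinuousAt.add _ continuousAt_const
      exact ContinuousAt.clog
        (((continuous_subtype_val.continuousAt).sub continuousAt_const).div
          continuousAt_const hune)
        (Complex.ball_one_subset_slitPlane (hq x))
    · intro x
      rw [Complex.exp_add, Complex.exp_log (hqne x), hw]
      rw [div_mul_cancel₀ _ hune]
      simp [hH]
  have h1 := hasLogF_homotopy H Hc Hne h0
  have h1' : HasLogF (fun x : K => (x : ℂ) - z) := by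
    convert h1 using 2 with x
    simp [hH]
  exact hasLogOn_of_hasLogF h1'

/-- Any nonvanishing continuous function on the continuous injective image of a
compact interval has a continuous logarithm there. -/
lemma hasLogOn_image {β : ℝ → ℂ} {a b : ℝ} (hab : a ≤ b)
    (hβc : ContinuousOn β (Icc a b)) (hβi : InjOn β (Icc a b))
    {f : ℂ → ℂ} (hfc : ContinuousOn f (β '' Icc a b))
    (hfne : ∀ x ∈ β '' Icc a b, f x ≠ 0) : HasLogOn f (β '' Icc a b) := by
  haveI : CompactSpace (Icc a b) := isCompact_iff_compactSpace.mp isCompact_Icc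
  have hane : (a : ℝ) ∈ Icc a b := ⟨le_refl _, hab⟩
  -- the contraction homotopy
  have hmem : ∀ (t : unitInterval) (s : Icc a b), a + (t : ℝ) * ((s : ℝ) - a) ∈ Icc a b := by
    rintro ⟨t, ht0, ht1⟩ ⟨s, hs1, hs2⟩
    constructor
    · have : 0 ≤ t * (s - a) := mul_nonneg ht0 (by linarith)
      simp only [Subtype.coe_mk]
      linarith
    · have h1 : t * (s - a) ≤ 1 * (s - a) := mul_le_mul_of_nonneg_right ht1 (by linarith)
      simp only [Subtype.coe_mk] at *
      nlinarith
  set H : unitInterval × (Icc a b) → ℂ := fun p => f (β (a + (p.1 : ℝ) * ((p.2 : ℝ) - a)))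
    with hH
  have hφ : Continuous fun p : unitInterval × (Icc a b) => a + (p.1 : ℝ) * ((p.2 : ℝ) - a) :=
    continuous_const.add ((continuous_subtype_val.comp continuous_fst).mul
      ((continuous_subtype_val.comp continuous_snd).sub continuous_const))
  have hfβ : ContinuousOn (fun r => f (β r)) (Icc a b) :=
    hfc.comp hβc (mapsTo_image β (Icc a b))
  have Hc : Continuous H := hfβ.comp_continuous hφ (fun p => hmem p.1 p.2)
  have Hne : ∀ p, H p ≠ 0 := fun p => hfne _ (mem_image_of_mem β (hmem p.1 p.2))
  have h0 : HasLogF (fun x : Icc a b => H (0, x)) := by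
    obtain ⟨w, hw⟩ := exists_exp_eq (hfne (β a) (mem_image_of_mem β hane))
    refine ⟨fun _ => w, continuous_const, ?_⟩
    intro x
    simp [hH, hw]
  have h1 := hasLogF_homotopy H Hc Hne h0
  have h1' : HasLogF (fun x : Icc a b => f (β (x : ℝ))) := by
    convert h1 using 2 with x
    simp [hH]
  -- transport along the homeomorphism onto the image
  obtain ⟨ℓ, hℓc, hℓ⟩ := h1'
  set e : Icc a b ≃ β '' Icc a b := Equiv.Set.imageOfInjOn β (Icc a b) hβi with he
  have hec : Continuous (e : Icc a b → β '' Icc a b) := by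
    apply Continuous.subtype_mk
    exact continuousOn_iff_continuous_restrict.mp hβc
  set h : Icc a b ≃ₜ β '' Icc a b := hec.homeoOfEquivCompactToT2 with hh
  classical
  apply hasLogOn_of_hasLogF
  refine ⟨fun y => ℓ (h.symm y), hℓc.comp h.symm.continuous, ?_⟩
  intro y
  have key : β ((h.symm y : Icc a b) : ℝ) = (y : ℂ) := by
    have := congrArg Subtype.val (h.apply_symm_apply y)
    exact this
  rw [hℓ]
  simp only []
  rw [key]

lemma im_two_pi_int (n : ℤ) :
    ((n : ℂ) * (2 * (Real.pi:ℂ) * Complex.I)).im = n * (2*Real.pi) := by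
  simp [Complex.mul_im]

/-- Patching continuous logarithms over two closed sets with preconnected intersection. -/
lemma hasLogOn_union {f : ℂ → ℂ} {A B : Set ℂ} (hAcl : IsClosed A) (hBcl : IsClosed B)
    (hconn : IsPreconnected (A ∩ B)) (hA : HasLogOn f A) (hB : HasLogOn f B) :
    HasLogOn f (A ∪ B) := by
  classical
  obtain ⟨gA, hgAc, hgA⟩ := hA
  obtain ⟨gB, hgBc, hgB⟩ := hB
  have hfne : ∀ x ∈ A, f x ≠ 0 := fun x hx => (hgA x hx) ▸ Complex.exp_ne_zero _
  have hd1 : ∀ x ∈ A ∩ B, Complex.exp (gA x - gB x) = 1 := by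
    intro x hx
    rw [Complex.exp_sub, hgA x hx.1, hgB x hx.2, div_self (hfne x hx.1)]
  have hdint : ∀ x ∈ A ∩ B, ∃ n : ℤ, gA x - gB x = n * (2 * Real.pi * Complex.I) := by
    intro x hx
    exact Complex.exp_eq_one_iff.mp (hd1 x hx)
  -- the difference is constant on the preconnected intersection
  have hconst : ∃ c : ℂ, Complex.exp c = 1 ∧ ∀ x ∈ A ∩ B, gA x = gB x + c := by
    rcases eq_empty_or_nonempty (A ∩ B) with hemp | ⟨x₀, hx₀⟩
    · exact ⟨0, Complex.exp_zero, by rw [hemp]; rintro x ⟨⟩⟩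
    · refine ⟨gA x₀ - gB x₀, hd1 x₀ hx₀, ?_⟩
      intro x hx
      set ψ : ℂ → ℝ := fun y => (gA y - gB y).im with hψ
      have hψc : ContinuousOn ψ (A ∩ B) :=
        (Complex.continuous_im.comp_continuousOn
          ((hgAc.mono inter_subset_left).sub (hgBc.mono inter_subset_right)))
      have hψval : ∀ y ∈ A ∩ B, ∃ n : ℤ, ψ y = n * (2 * Real.pi) := by
        intro y hy
        obtain ⟨n, hn⟩ := hdint y hy
        exact ⟨n, by rw [hψ]; simp only []; rw [hn, im_two_pi_int]⟩
      have him : ψ x = ψ x₀ := by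
        by_contra hne
        obtain ⟨n, hn⟩ := hψval x hx
        obtain ⟨n₀, hn₀⟩ := hψval x₀ hx₀
        have hnn : n ≠ n₀ := by
          intro h; apply hne; rw [hn, hn₀, h]
        have himg : IsPreconnected (ψ '' (A ∩ B)) := hconn.image ψ hψc
        have hoc := himg.ordConnected
        set m : ℤ := min n n₀ with hm
        set r : ℝ := (m : ℝ) * (2 * Real.pi) + Real.pi with hr
        have hpi := Real.pi_pos
        have hrmem : r ∈ Set.uIcc (ψ x) (ψ x₀) := by
          rw [Set.mem_uIcc]
          rcases lt_or_gt_of_ne hnn with h | h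
          · left
            have hmin : (m : ℝ) = (n : ℝ) := by
              rw [hm]; exact_mod_cast congrArg (Int.cast : ℤ → ℝ) (min_eq_left h.le)
            have hcast : (n : ℝ) + 1 ≤ (n₀ : ℝ) := by exact_mod_cast h
            constructor
            · rw [hn, hr, hmin]; nlinarith
            · rw [hn₀, hr, hmin]; nlinarith
          · right
            have hmin : (m : ℝ) = (n₀ : ℝ) := by
              rw [hm]; exact_mod_cast congrArg (Int.cast : ℤ → ℝ) (min_eq_right h.le)
            have hcast : (n₀ : ℝ) + 1 ≤ (n : ℝ) := by exact_mod_cast h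
            constructor
            · rw [hn₀, hr, hmin]; nlinarith
            · rw [hn, hr, hmin]; nlinarith
        obtain ⟨y, hy, hyr⟩ := hoc.uIcc_subset (mem_image_of_mem ψ hx)
          (mem_image_of_mem ψ hx₀) hrmem
        obtain ⟨ny, hny⟩ := hψval y hy
        rw [hny, hr] at hyr
        have hπ : Real.pi ≠ 0 := Real.pi_ne_zero
        have h2 : ((2*ny : ℤ):ℝ) * Real.pi = ((2*m+1 : ℤ):ℝ) * Real.pi := by
          push_cast
          ring_nf
          ring_nf at hyr
          linarith
        have h3 := mul_right_cancel₀ hπ h2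
        have h4 : (2*ny : ℤ) = 2*m+1 := by exact_mod_cast h3
        omega
      obtain ⟨n, hn⟩ := hdint x hx
      obtain ⟨n₀, hn₀⟩ := hdint x₀ hx₀
      have heq : gA x - gB x = gA x₀ - gB x₀ := by
        have h1 : ψ x = (n : ℝ) * (2 * Real.pi) := by
          rw [hψ]; simp only []; rw [hn, im_two_pi_int]
        have h2 : ψ x₀ = (n₀ : ℝ) * (2 * Real.pi) := by
          rw [hψ]; simp only []; rw [hn₀, im_two_pi_int]
        rw [h1, h2] at him
        have hpi := Real.pi_pos
        have hnR : (n : ℝ) = n₀ := by nlinarith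
        have hnZ : n = n₀ := by exact_mod_cast hnR
        rw [hn, hn₀, hnZ]
      linear_combination heq
  obtain ⟨c, hc1, hc⟩ := hconst
  set g : ℂ → ℂ := fun x => if x ∈ A then gA x else gB x + c with hg
  have hgA' : ∀ x ∈ A, g x = gA x := fun x hx => if_pos hx
  have hgB' : ∀ x ∈ B, g x = gB x + c := by
    intro x hx
    by_cases hxA : x ∈ A
    · rw [hg]; simp only [if_pos hxA]; exact hc x ⟨hxA, hx⟩
    · exact if_neg hxA
  refine ⟨g, ?_, ?_⟩
  · intro x hx
    have hA' : ContinuousWithinAt g A x := by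
      by_cases hxA : x ∈ closure A
      · rw [hAcl.closure_eq] at hxA
        exact ((hgAc x hxA).congr hgA' (hgA' x hxA))
      · exact continuousWithinAt_of_notMem_closure hxA
    have hB' : ContinuousWithinAt g B x := by
      by_cases hxB : x ∈ closure B
      · rw [hBcl.closure_eq] at hxB
        exact (((hgBc x hxB).add continuousWithinAt_const).congr hgB' (hgB' x hxB))
      · exact continuousWithinAt_of_notMem_closure hxB
    exact hA'.union hB'
  · rintro x (hx | hx)
    · rw [hgA' x hx]; exact hgA x hx
    · rw [hgB' x hx, Complex.exp_add, hc1, mul_one]; exact hgB x hx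

/-- The frontier of a connected component of an open set is disjoint from the set. -/
lemma frontier_connectedComponentIn_subset {F : Set ℂ} (hF : IsOpen F) (x : ℂ) :
    frontier (connectedComponentIn F x) ⊆ Fᶜ := by
  set V := connectedComponentIn F x with hV
  have hVopen : IsOpen V := hF.connectedComponentIn
  rw [hVopen.frontier_eq]
  rintro y ⟨hycl, hyV⟩
  by_contra hyF
  rw [mem_compl_iff, not_not] at hyF
  obtain ⟨ε, hε, hball⟩ := Metric.isOpen_iff.mp hF y hyF
  have hmeet : (Metric.ball y ε ∩ V).Nonempty := by
    have := mem_closure_iff.mp hycl (Metric.ball y ε) Metric.isOpen_ball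
      (Metric.mem_ball_self hε)
    exact this
  by_cases hxF : x ∈ F
  · have hxV : x ∈ V := mem_connectedComponentIn hxF
    have hunion : IsPreconnected (Metric.ball y ε ∪ V) :=
      IsPreconnected.union' hmeet (convex_ball y ε).isPreconnected
        isPreconnected_connectedComponentIn
    have hsub : Metric.ball y ε ∪ V ⊆ F :=
      union_subset hball (connectedComponentIn_subset F x)
    have := hunion.subset_connectedComponentIn (Or.inr hxV) hsub
    exact hyV (this (Or.inl (Metric.mem_ball_self hε)))
  · rw [hV, connectedComponentIn_eq_empty hxF] at hyV
    obtain ⟨w, -, hw⟩ := hmeet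
    rw [hV, connectedComponentIn_eq_empty hxF] at hw
    exact hw

/-- There is no continuous logarithm of the identity on a circle around the origin. -/
lemma no_log_id_on_sphere {R : ℝ} (hR : 0 < R) :
    ¬ ∃ ℓ : ℂ → ℂ, ContinuousOn ℓ (Metric.sphere 0 R) ∧
      ∀ x ∈ Metric.sphere (0:ℂ) R, Complex.exp (ℓ x) = x := by
  rintro ⟨ℓ, hℓc, hℓ⟩
  set e : ℝ → ℂ := fun θ => (R : ℂ) * Complex.exp (θ * Complex.I) with he
  have hene : ∀ θ, e θ ≠ 0 := fun θ =>
    mul_ne_zero (by exact_mod_cast hR.ne') (Complex.exp_ne_zero _)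
  have hemem : ∀ θ, e θ ∈ Metric.sphere (0:ℂ) R := by
    intro θ
    rw [mem_sphere_zero_iff_norm, he]
    simp only [norm_mul, Complex.norm_real, Real.norm_eq_abs,
      Complex.norm_exp_ofReal_mul_I, mul_one, abs_of_pos hR]
  have hecont : Continuous e :=
    continuous_const.mul ((Complex.continuous_ofReal.mul continuous_const).cexp)
  set u : ℝ → ℂ := fun θ => ℓ (e θ) with hu
  have hucont : Continuous u := hℓc.comp_continuous hecont hemem
  set d : ℝ → ℂ := fun θ => u θ - ((Real.log R : ℂ) + θ * Complex.I) with hd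
  have hexpd : ∀ θ, Complex.exp (d θ) = 1 := by
    intro θ
    rw [hd]
    simp only []
    rw [Complex.exp_sub, Complex.exp_add, hu]
    simp only []
    rw [hℓ _ (hemem θ), ← Complex.ofReal_exp, Real.exp_log hR]
    rw [div_self (hene θ)]
  set ψ : ℝ → ℝ := fun θ => (d θ).im with hψ
  have hψc : Continuous ψ := Complex.continuous_im.comp (hucont.sub (by continuity))
  have hψval : ∀ θ, ∃ n : ℤ, ψ θ = n * (2 * Real.pi) := by
    intro θ
    obtain ⟨n, hn⟩ := Complex.exp_eq_one_iff.mp (hexpd θ)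
    exact ⟨n, by rw [hψ]; simp only []; rw [hn, im_two_pi_int]⟩
  have hea : e (2 * Real.pi) = (R : ℂ) := by
    rw [he]
    simp only []
    rw [show ((2 * Real.pi : ℝ) : ℂ) * Complex.I = 2 * (Real.pi : ℂ) * Complex.I by
      push_cast; ring]
    rw [Complex.exp_two_pi_mul_I, mul_one]
  have heb : e 0 = (R : ℂ) := by
    rw [he]
    simp only []
    norm_num
  have hper : u (2 * Real.pi) = u 0 := by
    rw [hu]
    simp only []
    rw [hea, heb]
  have hdiff : ψ (2 * Real.pi) = ψ 0 - 2 * Real.pi := by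
    rw [hψ]
    simp only []
    rw [hd]
    simp only [hper]
    simp only [Complex.sub_im, Complex.add_im, Complex.mul_im, Complex.ofReal_im,
      Complex.I_im, Complex.ofReal_re, Complex.I_re]
    ring
  obtain ⟨n₀, hn₀⟩ := hψval 0
  have hpi := Real.pi_pos
  set r : ℝ := ψ 0 - Real.pi with hr
  have hrmem : r ∈ Set.uIcc (ψ 0) (ψ (2 * Real.pi)) := by
    rw [Set.mem_uIcc]
    right
    constructor
    · rw [hdiff, hr]; linarith
    · rw [hr]; linarith
  have := intermediate_value_uIcc (hψc.continuousOn (s := Set.uIcc 0 (2*Real.pi)))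
  obtain ⟨θ, -, hθ⟩ := this hrmem
  obtain ⟨n, hn⟩ := hψval θ
  rw [hn] at hθ
  rw [hr, hn₀] at hθ
  have hπ : Real.pi ≠ 0 := Real.pi_ne_zero
  have h2 : ((2*n : ℤ):ℝ) * Real.pi = ((2*n₀ - 1 : ℤ):ℝ) * Real.pi := by
    push_cast
    ring_nf
    ring_nf at hθ
    linarith
  have h3 := mul_right_cancel₀ hπ h2
  have h4 : (2*n : ℤ) = 2*n₀ - 1 := by exact_mod_cast h3
  omega

/-- **Borsuk criterion**: if `z` lies in a bounded component of the complement of the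
compact set `K`, then `x ↦ x - z` has no continuous logarithm on `K`. -/
lemma not_hasLogOn_sub_of_bounded {K : Set ℂ} (hK : IsCompact K) {z : ℂ} (hz : z ∉ K)
    (hb : Bornology.IsBounded (connectedComponentIn Kᶜ z)) :
    ¬ HasLogOn (fun x => x - z) K := by
  classical
  rintro ⟨g, hgc, hg⟩
  set V := connectedComponentIn Kᶜ z with hV
  have hzV : z ∈ V := mem_connectedComponentIn hz
  have hfr : frontier V ⊆ K := by
    have := frontier_connectedComponentIn_subset hK.isClosed.isOpen_compl z
    rwa [compl_compl] at this
  -- Tietze extension of the logarithm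
  obtain ⟨G, hG⟩ := ContinuousMap.exists_restrict_eq (X := ℂ) hK.isClosed
    ⟨fun x : K => g x, continuousOn_iff_continuous_restrict.mp hgc⟩
  have hGeq : ∀ x ∈ K, G x = g x := by
    intro x hx
    exact DFunLike.congr_fun hG ⟨x, hx⟩
  -- the glued nonvanishing map
  set h : ℂ → ℂ := fun x => if x ∈ closure V then Complex.exp (G x) else x - z with hh
  have hhc : Continuous h := by
    apply Continuous.if
    · intro a ha
      have haK : a ∈ K := by
        have h1 : frontier {x : ℂ | x ∈ closure V} ⊆ frontier V := by
          rw [show {x : ℂ | x ∈ closure V} = closure V from rfl]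
          exact frontier_closure_subset
        exact hfr (h1 ha)
      rw [hGeq a haK, hg a haK]
    · exact Complex.continuous_exp.comp G.continuous
    · exact continuous_id.sub continuous_const
  have hhne : ∀ x, h x ≠ 0 := by
    intro x
    rw [hh]
    simp only []
    split_ifs with hx
    · exact Complex.exp_ne_zero _
    · rw [sub_ne_zero]
      intro hcon
      exact hx (hcon ▸ subset_closure hzV)
  -- a big radius
  obtain ⟨M, hM⟩ := (hb.closure).subset_closedBall 0
  set R : ℝ := max M ‖z‖ + 1 with hRdef
  have hRz : ‖z‖ < R := lt_of_le_of_lt (le_max_right M ‖z‖) (by rw [hRdef]; linarith)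
  have hR0 : 0 < R := lt_of_le_of_lt (norm_nonneg z) hRz
  have hRV : ∀ x ∈ closure V, ‖x‖ < R := by
    intro x hx
    have := hM hx
    rw [Metric.mem_closedBall, dist_zero_right] at this
    exact lt_of_le_of_lt this (lt_of_le_of_lt (le_max_left M ‖z‖) (by rw [hRdef]; linarith))
  -- logarithm of h on the closed ball via the contraction homotopy
  haveI : CompactSpace (Metric.closedBall (0:ℂ) R) :=
    isCompact_iff_compactSpace.mp (isCompact_closedBall _ _)
  have hball : HasLogOn h (Metric.closedBall (0:ℂ) R) := by
    apply hasLogOn_of_hasLogF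
    set H : unitInterval × (Metric.closedBall (0:ℂ) R) → ℂ :=
      fun p => h (((p.1 : ℝ) : ℂ) * (p.2 : ℂ)) with hH
    have Hc : Continuous H := by
      apply hhc.comp
      exact ((Complex.continuous_ofReal.comp
        (continuous_subtype_val.comp continuous_fst)).mul
        (continuous_subtype_val.comp continuous_snd))
    have Hne : ∀ p, H p ≠ 0 := fun p => hhne _
    have h0 : HasLogF (fun x : Metric.closedBall (0:ℂ) R => H (0, x)) := by
      obtain ⟨w, hw⟩ := exists_exp_eq (hhne 0)
      refine ⟨fun _ => w, continuous_const, ?_⟩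
      intro x
      rw [hH]
      simp only []
      norm_num
      exact hw
    have h1 := hasLogF_homotopy H Hc Hne h0
    convert h1 using 2 with x
    rw [hH]
    simp only []
    norm_num
  obtain ⟨ℓ, hℓc, hℓ⟩ := hball
  -- on the sphere, h is x - z; remove z by a homotopy
  have hsph_subset : Metric.sphere (0:ℂ) R ⊆ Metric.closedBall (0:ℂ) R :=
    Metric.sphere_subset_closedBall
  have hsph_notV : ∀ x ∈ Metric.sphere (0:ℂ) R, x ∉ closure V := by
    intro x hx hmem
    rw [mem_sphere_zero_iff_norm] at hx
    exact absurd (hRV x hmem) (by rw [hx]; exact lt_irrefl R)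
  have hsph_h : ∀ x ∈ Metric.sphere (0:ℂ) R, h x = x - z := by
    intro x hx
    rw [hh]
    simp only []
    rw [if_neg (hsph_notV x hx)]
  haveI : CompactSpace (Metric.sphere (0:ℂ) R) :=
    isCompact_iff_compactSpace.mp (isCompact_sphere _ _)
  have hid : HasLogOn (fun x => x) (Metric.sphere (0:ℂ) R) := by
    apply hasLogOn_of_hasLogF
    set H' : unitInterval × (Metric.sphere (0:ℂ) R) → ℂ :=
      fun p => (p.2 : ℂ) - (((1 - (p.1 : ℝ)) : ℝ) : ℂ) * z with hH'
    have H'c : Continuous H' := by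
      apply Continuous.sub
      · exact continuous_subtype_val.comp continuous_snd
      · exact (Complex.continuous_ofReal.comp
          (continuous_const.sub (continuous_subtype_val.comp continuous_fst))).mul
          continuous_const
    have H'ne : ∀ p, H' p ≠ 0 := by
      rintro ⟨t, x⟩ hcon
      rw [hH', sub_eq_zero] at hcon
      have hx : ‖(x : ℂ)‖ = R := mem_sphere_zero_iff_norm.mp x.2
      have ht0 : (0:ℝ) ≤ 1 - (t : ℝ) := by linarith [t.2.2]
      have ht1 : 1 - (t : ℝ) ≤ 1 := by linarith [t.2.1]
      have : ‖(((1 - (t : ℝ)) : ℝ) : ℂ) * z‖ ≤ ‖z‖ := by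
        rw [norm_mul, Complex.norm_real, Real.norm_of_nonneg ht0]
        nlinarith [norm_nonneg z]
      rw [hcon] at hx
      linarith
    have h0' : HasLogF (fun x : Metric.sphere (0:ℂ) R => H' (0, x)) := by
      refine ⟨fun x => ℓ (x : ℂ), ?_, ?_⟩
      · exact continuousOn_iff_continuous_restrict.mp (hℓc.mono hsph_subset)
      · intro x
        rw [hH']
        simp only []
        norm_num
        rw [hℓ _ (hsph_subset x.2), hsph_h _ x.2]
    have h1' := hasLogF_homotopy H' H'c H'ne h0'
    convert h1' using 2 with x
    rw [hH']
    simp only []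
    norm_num
  obtain ⟨ℓ', hℓ'c, hℓ'⟩ := hid
  exact no_log_id_on_sphere hR0 ⟨ℓ', hℓ'c, hℓ'⟩

/-- **Janiszewski's theorem** in `ℂ`. -/
lemma janiszewski_C {A B : Set ℂ} (hA : IsCompact A) (hB : IsCompact B)
    (hAB : IsPreconnected (A ∩ B)) {z : ℂ} (hzA : z ∉ A) (hzB : z ∉ B)
    (huA : ¬ Bornology.IsBounded (connectedComponentIn Aᶜ z))
    (huB : ¬ Bornology.IsBounded (connectedComponentIn Bᶜ z)) :
    ¬ Bornology.IsBounded (connectedComponentIn (A ∪ B)ᶜ z) := by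
  intro hbad
  have hzAB : z ∉ A ∪ B := by rintro (h | h) <;> [exact hzA h; exact hzB h]
  exact not_hasLogOn_sub_of_bounded (hA.union hB) hzAB hbad
    (hasLogOn_union hA.isClosed hB.isClosed hAB
      (hasLogOn_sub_of_unbounded hA hzA huA)
      (hasLogOn_sub_of_unbounded hB hzB huB))

/-! ### Transfer between `ℝ × ℝ` and `ℂ` -/

noncomputable def cplx : ℝ × ℝ ≃ₜ ℂ := Complex.equivRealProdCLM.symm.toHomeomorph

lemma cplx_isBounded_image {s : Set (ℝ × ℝ)} :
    Bornology.IsBounded (cplx '' s) ↔ Bornology.IsBounded s := by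
  constructor
  · intro h
    have h2 := Complex.lipschitz_equivRealProd.isBounded_image h
    have h3 : Complex.equivRealProd '' (cplx '' s) = s := by
      rw [← image_comp]
      have hcomp : (Complex.equivRealProd : ℂ → ℝ × ℝ) ∘ (cplx : ℝ × ℝ → ℂ) = id := by
        funext x
        show Complex.equivRealProd (Complex.equivRealProdCLM.symm x) = x
        exact Complex.equivRealProdCLM.apply_symm_apply x
      rw [hcomp, image_id]
    rwa [h3] at h2
  · intro h
    have : LipschitzWith _ (cplx : ℝ × ℝ → ℂ) :=
      Complex.equivRealProdCLM.symm.toContinuousLinearMap.lipschitz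
    exact this.isBounded_image h

lemma cplx_bounded_ccIn_compl {S : Set (ℝ × ℝ)} {x : ℝ × ℝ} (hx : x ∉ S) :
    Bornology.IsBounded (connectedComponentIn Sᶜ x) ↔
      Bornology.IsBounded (connectedComponentIn (cplx '' S)ᶜ (cplx x)) := by
  have himg : cplx '' Sᶜ = (cplx '' S)ᶜ := Set.image_compl_eq cplx.bijective
  have hxc : x ∈ Sᶜ := hx
  rw [← himg, ← cplx.image_connectedComponentIn hxc, cplx_isBounded_image]

/-- Cutting a subarc of `Q` out of the circuit `Q ∪ Q'` leaves an arc, on which every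
function `x - z` (for `z` off the circuit) has a continuous logarithm. -/
lemma arc_complement_log (Q Q' : ℝ → ℂ) (w₀ w₁ : ℂ)
    (hQc : ContinuousOn Q (Icc 0 1)) (hQ'c : ContinuousOn Q' (Icc 0 1))
    (hQi : InjOn Q (Icc 0 1)) (hQ'i : InjOn Q' (Icc 0 1))
    (hQ0 : Q 0 = w₀) (hQ1 : Q 1 = w₁) (hQ'0 : Q' 0 = w₀) (hQ'1 : Q' 1 = w₁)
    (hQQ' : Q '' (Icc 0 1) ∩ Q' '' (Icc 0 1) = {w₀, w₁})
    (a b : ℝ) (ha : 0 < a) (hab : a < b) (hb1 : b < 1) :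
    ∃ α : Set ℂ, IsCompact α ∧ α ⊆ Q '' (Icc 0 1) ∪ Q' '' (Icc 0 1) ∧
      Q' '' (Icc 0 1) ⊆ α ∧ Q '' (Icc 0 a) ⊆ α ∧ Q '' (Icc b 1) ⊆ α ∧
      ∀ z, z ∉ Q '' (Icc 0 1) ∪ Q' '' (Icc 0 1) → HasLogOn (fun x => x - z) α := by
  classical
  set L : ℝ := a + 2 - b with hL
  have ha1 : a < 1 := lt_trans hab hb1
  have hb0 : 0 < b := lt_trans ha hab
  have haL : a + 1 ≤ L := by rw [hL]; linarith
  have h0a : (0:ℝ) ≤ a := ha.le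
  set β : ℝ → ℂ := fun t => if t ≤ a then Q (a - t) else if t ≤ a + 1 then Q' (t - a)
    else Q (a + 2 - t) with hβ
  -- membership helpers
  have hm1 : ∀ t ∈ Icc (0:ℝ) a, a - t ∈ Icc (0:ℝ) 1 := by
    rintro t ⟨h1, h2⟩; constructor <;> [linarith; linarith]
  have hm2 : ∀ t ∈ Icc a (a+1), t - a ∈ Icc (0:ℝ) 1 := by
    rintro t ⟨h1, h2⟩; constructor <;> [linarith; linarith]
  have hm3 : ∀ t ∈ Icc (a+1) L, a + 2 - t ∈ Icc (0:ℝ) 1 := by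
    rintro t ⟨h1, h2⟩
    rw [hL] at h2
    constructor <;> [linarith; linarith]
  -- formulas on the pieces
  have hβ₁ : ∀ t ∈ Icc (0:ℝ) a, β t = Q (a - t) := by
    rintro t ⟨-, h2⟩
    rw [hβ]; simp only [if_pos h2]
  have hβ₂ : ∀ t ∈ Icc a (a+1), β t = Q' (t - a) := by
    rintro t ⟨h1, h2⟩
    rw [hβ]
    simp only []
    by_cases h : t ≤ a
    · have hta : t = a := le_antisymm h h1
      rw [if_pos h, hta]
      simp only [sub_self]
      rw [hQ0, hQ'0]
    · rw [if_neg h, if_pos h2]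
  have hβ₃ : ∀ t ∈ Icc (a+1) L, β t = Q (a + 2 - t) := by
    rintro t ⟨h1, h2⟩
    rw [hβ]
    simp only []
    have h : ¬ t ≤ a := by linarith
    rw [if_neg h]
    by_cases h' : t ≤ a + 1
    · have hta : t = a + 1 := le_antisymm h' h1
      rw [if_pos h', hta]
      have e1 : a + 1 - a = (1:ℝ) := by ring
      have e2 : a + 2 - (a + 1) = (1:ℝ) := by ring
      rw [e1, e2, hQ1, hQ'1]
    · rw [if_neg h']
  -- continuity
  have hc1 : ContinuousOn β (Icc 0 a) :=
    (hQc.comp ((continuous_const.sub continuous_id).continuousOn) hm1).congr hβ₁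
  have hc2 : ContinuousOn β (Icc a (a+1)) :=
    (hQ'c.comp ((continuous_id.sub continuous_const).continuousOn) hm2).congr hβ₂
  have hc3 : ContinuousOn β (Icc (a+1) L) :=
    (hQc.comp ((continuous_const.sub continuous_id).continuousOn) hm3).congr hβ₃
  have hsplit : Icc (0:ℝ) L = Icc 0 a ∪ (Icc a (a+1) ∪ Icc (a+1) L) := by
    rw [Set.Icc_union_Icc_eq_Icc (by linarith : a ≤ a+1) haL]
    rw [Set.Icc_union_Icc_eq_Icc h0a (by linarith : a ≤ L)]
  have hβc : ContinuousOn β (Icc 0 L) := by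
    intro t ht
    have cwa : ∀ s : Set ℝ, IsClosed s → ContinuousOn β s → ContinuousWithinAt β s t := by
      intro s hscl hsc
      by_cases hts : t ∈ s
      · exact hsc t hts
      · exact continuousWithinAt_of_notMem_closure (by rwa [hscl.closure_eq])
    have h1 := cwa _ isClosed_Icc hc1
    have h2 := cwa _ isClosed_Icc hc2
    have h3 := cwa _ isClosed_Icc hc3
    have := h1.union (h2.union h3)
    rwa [← hsplit] at this
  -- injectivity
  have hQmem : ∀ s ∈ Icc (0:ℝ) 1, Q s ∈ Q '' Icc 0 1 := fun s hs => mem_image_of_mem Q hs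
  have hQ'mem : ∀ s ∈ Icc (0:ℝ) 1, Q' s ∈ Q' '' Icc 0 1 := fun s hs => mem_image_of_mem Q' hs
  have hβi : InjOn β (Icc 0 L) := by
    -- case analysis on the three pieces
    have key : ∀ t ∈ Icc (0:ℝ) L, ∀ t' ∈ Icc (0:ℝ) L, t ≤ t' → β t = β t' → t = t' := by
      rintro t ⟨ht0, htL⟩ t' ⟨ht'0, ht'L⟩ htt' heq
      by_cases h1 : t ≤ a
      · have hβt : β t = Q (a - t) := hβ₁ t ⟨ht0, h1⟩
        by_cases h1' : t' ≤ a
        · have hβt' : β t' = Q (a - t') := hβ₁ t' ⟨ht'0, h1'⟩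
          have := hQi (hm1 t ⟨ht0, h1⟩) (hm1 t' ⟨ht'0, h1'⟩) (by rw [← hβt, ← hβt', heq])
          linarith
        · by_cases h2' : t' ≤ a + 1
          · -- t in piece 1, t' in piece 2 (strictly)
            have hβt' : β t' = Q' (t' - a) := hβ₂ t' ⟨by linarith, h2'⟩
            have hv : Q (a - t) ∈ ({w₀, w₁} : Set ℂ) := by
              rw [← hQQ']
              exact ⟨hQmem _ (hm1 t ⟨ht0, h1⟩), by
                rw [← hβt, heq, hβt']; exact hQ'mem _ (hm2 t' ⟨by linarith, h2'⟩)⟩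
            rcases hv with hv | hv
            · -- value w₀ : then t' = a, contradiction with t' > a
              have : Q' (t' - a) = Q' 0 := by rw [hQ'0, ← hβt', ← heq, hβt, hv]
              have := hQ'i (hm2 t' ⟨by linarith, h2'⟩) ⟨le_refl 0, zero_le_one⟩ this
              linarith
            · -- value w₁ : then a - t = 1, impossible
              have : Q (a - t) = Q 1 := by rw [hQ1, hv]
              have := hQi (hm1 t ⟨ht0, h1⟩) ⟨zero_le_one, le_refl 1⟩ this
              linarith
          · -- t in piece 1, t' in piece 3 (strictly)
            have hβt' : β t' = Q (a + 2 - t') := hβ₃ t' ⟨by linarith, ht'L⟩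
            have := hQi (hm1 t ⟨ht0, h1⟩) (hm3 t' ⟨by linarith, ht'L⟩)
              (by rw [← hβt, ← hβt', heq])
            rw [hL] at ht'L
            linarith
      · by_cases h2 : t ≤ a + 1
        · have hβt : β t = Q' (t - a) := hβ₂ t ⟨by linarith, h2⟩
          by_cases h2' : t' ≤ a + 1
          · have hβt' : β t' = Q' (t' - a) := hβ₂ t' ⟨by linarith, h2'⟩
            have := hQ'i (hm2 t ⟨by linarith, h2⟩) (hm2 t' ⟨by linarith, h2'⟩)
              (by rw [← hβt, ← hβt', heq])
            linarith
          · -- t in piece 2, t' in piece 3 (strictly)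
            have hβt' : β t' = Q (a + 2 - t') := hβ₃ t' ⟨by linarith, ht'L⟩
            have hv : Q (a + 2 - t') ∈ ({w₀, w₁} : Set ℂ) := by
              rw [← hQQ']
              refine ⟨hQmem _ (hm3 t' ⟨by linarith, ht'L⟩), ?_⟩
              rw [← hβt', ← heq, hβt]
              exact hQ'mem _ (hm2 t ⟨by linarith, h2⟩)
            rcases hv with hv | hv
            · -- value w₀ : a + 2 - t' = 0, impossible
              have : Q (a + 2 - t') = Q 0 := by rw [hQ0, hv]
              have := hQi (hm3 t' ⟨by linarith, ht'L⟩) ⟨le_refl 0, zero_le_one⟩ this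
              rw [hL] at ht'L
              linarith
            · -- value w₁ : t = a+1 and t' = a+1, contradiction with t' > a+1
              have hQ'eq : Q' (t - a) = Q' 1 := by rw [hQ'1, ← hβt, heq, hβt', hv]
              have h5 := hQ'i (hm2 t ⟨by linarith, h2⟩) ⟨zero_le_one, le_refl 1⟩ hQ'eq
              have hQeq : Q (a + 2 - t') = Q 1 := by rw [hQ1, hv]
              have h6 := hQi (hm3 t' ⟨by linarith, ht'L⟩) ⟨zero_le_one, le_refl 1⟩ hQeq
              linarith
        · -- both in piece 3
          have hβt : β t = Q (a + 2 - t) := hβ₃ t ⟨by linarith, htL⟩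
          have h2' : ¬ t' ≤ a + 1 := by intro h; exact h2 (le_trans htt' h)
          have hβt' : β t' = Q (a + 2 - t') := hβ₃ t' ⟨by linarith, ht'L⟩
          have := hQi (hm3 t ⟨by linarith, htL⟩) (hm3 t' ⟨by linarith, ht'L⟩)
            (by rw [← hβt, ← hβt', heq])
          linarith
    intro t ht t' ht' heq
    rcases le_total t t' with h | h
    · exact key t ht t' ht' h heq
    · exact (key t' ht' t ht h heq.symm).symm
  refine ⟨β '' Icc 0 L, isCompact_Icc.image_of_continuousOn hβc, ?_, ?_, ?_, ?_, ?_⟩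
  · -- α ⊆ Q ∪ Q'
    rintro x ⟨t, ht, rfl⟩
    have ht' : t ∈ Icc 0 a ∪ (Icc a (a+1) ∪ Icc (a+1) L) := hsplit ▸ ht
    rcases ht' with h | h | h
    · exact Or.inl (by rw [hβ₁ t h]; exact hQmem _ (hm1 t h))
    · exact Or.inr (by rw [hβ₂ t h]; exact hQ'mem _ (hm2 t h))
    · exact Or.inl (by rw [hβ₃ t h]; exact hQmem _ (hm3 t h))
  · -- Q' ⊆ α
    rintro x ⟨s, hs, rfl⟩
    refine ⟨a + s, ?_, ?_⟩
    · rw [hsplit]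
      right; left
      exact ⟨by linarith [hs.1], by linarith [hs.2]⟩
    · rw [hβ₂ (a + s) ⟨by linarith [hs.1], by linarith [hs.2]⟩]
      congr 1
      ring
  · -- Q '' [0,a] ⊆ α
    rintro x ⟨s, hs, rfl⟩
    refine ⟨a - s, ?_, ?_⟩
    · rw [hsplit]
      left
      exact ⟨by linarith [hs.2], by linarith [hs.1]⟩
    · rw [hβ₁ (a - s) ⟨by linarith [hs.2], by linarith [hs.1]⟩]
      congr 1
      ring
  · -- Q '' [b,1] ⊆ α
    rintro x ⟨s, hs, rfl⟩
    refine ⟨a + 2 - s, ?_, ?_⟩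
    · rw [hsplit]
      right; right
      exact ⟨by linarith [hs.2], by rw [hL]; linarith [hs.1]⟩
    · rw [hβ₃ (a + 2 - s) ⟨by linarith [hs.2], by rw [hL]; linarith [hs.1]⟩]
      congr 1
      ring
  · -- the logarithm
    intro z hz
    have hαsub : β '' Icc 0 L ⊆ Q '' (Icc 0 1) ∪ Q' '' (Icc 0 1) := by
      rintro x ⟨t, ht, rfl⟩
      have ht' : t ∈ Icc 0 a ∪ (Icc a (a+1) ∪ Icc (a+1) L) := hsplit ▸ ht
      rcases ht' with h | h | h
      · exact Or.inl (by rw [hβ₁ t h]; exact hQmem _ (hm1 t h))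
      · exact Or.inr (by rw [hβ₂ t h]; exact hQ'mem _ (hm2 t h))
      · exact Or.inl (by rw [hβ₃ t h]; exact hQmem _ (hm3 t h))
    apply hasLogOn_image (by rw [hL]; linarith : (0:ℝ) ≤ L) hβc hβi
    · exact (continuous_id.sub continuous_const).continuousOn
    · intro x hx
      rw [sub_ne_zero]
      intro hcon
      exact hz (hcon ▸ hαsub hx)

/-- The detour lemma, complex form. -/
lemma main_C (Q Q' P : ℝ → ℂ) (w₀ w₁ : ℂ) (z : ℂ)
    (hQc : ContinuousOn Q (Icc 0 1)) (hQ'c : ContinuousOn Q' (Icc 0 1))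
    (hPc : ContinuousOn P (Icc 0 1))
    (hQi : InjOn Q (Icc 0 1)) (hQ'i : InjOn Q' (Icc 0 1))
    (hQ0 : Q 0 = w₀) (hQ1 : Q 1 = w₁)
    (hQ'0 : Q' 0 = w₀) (hQ'1 : Q' 1 = w₁)
    (hP0 : P 0 = w₀) (hP1 : P 1 = w₁)
    (hQQ' : Q '' (Icc 0 1) ∩ Q' '' (Icc 0 1) = {w₀, w₁})
    (hPQ : P '' (Icc 0 1) ∩ Q '' (Icc 0 1) = {w₀, w₁})
    (hPQ' : P '' (Icc 0 1) ∩ Q' '' (Icc 0 1) = {w₀, w₁})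
    (hzγ : z ∉ Q '' (Icc 0 1) ∪ Q' '' (Icc 0 1))
    (hsurr : Bornology.IsBounded
      (connectedComponentIn (Q '' (Icc 0 1) ∪ Q' '' (Icc 0 1))ᶜ z))
    (hPext : ∀ p ∈ P '' (Icc 0 1) \ {w₀, w₁},
      ¬ Bornology.IsBounded (connectedComponentIn (Q '' (Icc 0 1) ∪ Q' '' (Icc 0 1))ᶜ p))
    (hzA : z ∉ P '' (Icc 0 1) ∪ Q '' (Icc 0 1))
    (hnots : ¬ Bornology.IsBounded
      (connectedComponentIn (P '' (Icc 0 1) ∪ Q '' (Icc 0 1))ᶜ z)) :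
    (z ∉ P '' (Icc 0 1) ∪ Q' '' (Icc 0 1) ∧
      Bornology.IsBounded (connectedComponentIn (P '' (Icc 0 1) ∪ Q' '' (Icc 0 1))ᶜ z)) ∧
    ∀ q ∈ Q '' (Icc 0 1) \ {w₀, w₁},
      q ∉ P '' (Icc 0 1) ∪ Q' '' (Icc 0 1) ∧
      Bornology.IsBounded (connectedComponentIn (P '' (Icc 0 1) ∪ Q' '' (Icc 0 1))ᶜ q) := by
  have hQcomp : IsCompact (Q '' Icc 0 1) := isCompact_Icc.image_of_continuousOn hQc
  have hQ'comp : IsCompact (Q' '' Icc 0 1) := isCompact_Icc.image_of_continuousOn hQ'c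
  have hPcomp : IsCompact (P '' Icc 0 1) := isCompact_Icc.image_of_continuousOn hPc
  set γ : Set ℂ := Q '' (Icc 0 1) ∪ Q' '' (Icc 0 1) with hγ
  set A : Set ℂ := P '' (Icc 0 1) ∪ Q '' (Icc 0 1) with hA
  set B : Set ℂ := P '' (Icc 0 1) ∪ Q' '' (Icc 0 1) with hB
  have hγcomp : IsCompact γ := hQcomp.union hQ'comp
  have hAcomp : IsCompact A := hPcomp.union hQcomp
  have hBcomp : IsCompact B := hPcomp.union hQ'comp
  have hw₀P : w₀ ∈ P '' (Icc 0 1) := ⟨0, ⟨le_refl 0, zero_le_one⟩, hP0⟩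
  have hw₁P : w₁ ∈ P '' (Icc 0 1) := ⟨1, ⟨zero_le_one, le_refl 1⟩, hP1⟩
  have hw₀Q : w₀ ∈ Q '' (Icc 0 1) := ⟨0, ⟨le_refl 0, zero_le_one⟩, hQ0⟩
  have hw₁Q : w₁ ∈ Q '' (Icc 0 1) := ⟨1, ⟨zero_le_one, le_refl 1⟩, hQ1⟩
  have hzB : z ∉ B := by
    rintro (h | h)
    · exact hzA (Or.inl h)
    · exact hzγ (Or.inr h)
  -- Part 1 : the component of z in Bᶜ is bounded
  have hABeq : A ∩ B = P '' (Icc 0 1) := by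
    apply Subset.antisymm
    · rintro x ⟨(hP | hQ), (hP' | hQ')⟩
      · exact hP
      · exact hP
      · exact hP'
      · have : x ∈ ({w₀, w₁} : Set ℂ) := hQQ' ▸ ⟨hQ, hQ'⟩
        rcases this with rfl | rfl <;> assumption
    · exact fun x hx => ⟨Or.inl hx, Or.inl hx⟩
  have hP1bdd : Bornology.IsBounded (connectedComponentIn Bᶜ z) := by
    by_contra hDB
    have hkey := janiszewski_C hAcomp hBcomp (by
        rw [hABeq]; exact isPreconnected_Icc.image P hPc) hzA hzB hnots hDB
    apply hkey
    apply hsurr.subset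
    apply connectedComponentIn_mono
    intro x hx
    simp only [mem_compl_iff, mem_union] at hx ⊢
    rintro (h | h)
    · exact hx (Or.inl (Or.inr h))
    · exact hx (Or.inr (Or.inr h))
  refine ⟨⟨hzB, hP1bdd⟩, ?_⟩
  -- Part 2 : points of Q minus endpoints lie in the same bounded component
  rintro q ⟨hqQ, hqw⟩
  have hqB : q ∉ B := by
    rintro (h | h)
    · exact hqw (hPQ ▸ ⟨h, hqQ⟩)
    · exact hqw (hQQ' ▸ ⟨hqQ, h⟩)
  refine ⟨hqB, ?_⟩
  set U : Set ℂ := connectedComponentIn γᶜ z with hU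
  have hzγc : z ∈ γᶜ := hzγ
  have hzU : z ∈ U := mem_connectedComponentIn hzγc
  have hUopen : IsOpen U := hγcomp.isClosed.isOpen_compl.connectedComponentIn
  have hUB : U ⊆ Bᶜ := by
    intro y hy
    have hyγ : y ∉ γ := connectedComponentIn_subset γᶜ z hy
    rintro (hyP | hyQ')
    · by_cases hyw : y ∈ ({w₀, w₁} : Set ℂ)
      · rcases hyw with rfl | rfl
        · exact hyγ (Or.inl hw₀Q)
        · exact hyγ (Or.inl hw₁Q)
      · have := hPext y ⟨hyP, hyw⟩
        apply this
        have heq := connectedComponentIn_eq hy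
        rw [← heq]
        exact hsurr
    · exact hyγ (Or.inr hyQ')
  have hUD : U ⊆ connectedComponentIn Bᶜ z :=
    isPreconnected_connectedComponentIn.subset_connectedComponentIn hzU hUB
  -- q is in the closure of U
  have hqclU : q ∈ closure U := by
    by_contra hqcl
    obtain ⟨ε, hε, hball⟩ := Metric.isOpen_iff.mp (isClosed_closure.isOpen_compl) q hqcl
    -- parameter of q
    obtain ⟨s₀, hs₀I, rfl⟩ := hqQ
    have hs₀0 : s₀ ≠ 0 := by
      rintro rfl
      exact hqw (Or.inl hQ0)
    have hs₀1 : s₀ ≠ 1 := by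
      rintro rfl
      exact hqw (Or.inr hQ1)
    have hs₀pos : 0 < s₀ := lt_of_le_of_ne hs₀I.1 (Ne.symm hs₀0)
    have hs₀lt : s₀ < 1 := lt_of_le_of_ne hs₀I.2 hs₀1
    -- modulus of continuity at s₀
    obtain ⟨δ₀, hδ₀, hδ₀prop⟩ := Metric.continuousWithinAt_iff.mp (hQc s₀ hs₀I) ε hε
    set δ : ℝ := min (δ₀/2) (min (s₀/2) ((1 - s₀)/2)) with hδdef
    have hδpos : 0 < δ := by
      apply lt_min (by linarith)
      exact lt_min (by linarith) (by linarith)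
    have hδ1 : δ ≤ δ₀/2 := min_le_left _ _
    have hδ2 : δ ≤ s₀/2 := le_trans (min_le_right _ _) (min_le_left _ _)
    have hδ3 : δ ≤ (1 - s₀)/2 := le_trans (min_le_right _ _) (min_le_right _ _)
    set a : ℝ := s₀ - δ with hadef
    set b : ℝ := s₀ + δ with hbdef
    have ha : 0 < a := by rw [hadef]; linarith
    have hab : a < b := by rw [hadef, hbdef]; linarith
    have hb1 : b < 1 := by rw [hbdef]; linarith
    have hQnear : ∀ s ∈ Icc a b, Q s ∈ Metric.ball (Q s₀) ε := by
      intro s hs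
      have hsI : s ∈ Icc (0:ℝ) 1 := ⟨by linarith [hs.1], by linarith [hs.2]⟩
      have : dist s s₀ < δ₀ := by
        rw [Real.dist_eq, abs_lt]
        constructor
        · have := hs.1; rw [hadef] at this; linarith
        · have := hs.2; rw [hbdef] at this; linarith
      exact hδ₀prop hsI this
    obtain ⟨α, hαcomp, hαγ, hQ'α, hQaα, hQbα, hαlog⟩ :=
      arc_complement_log Q Q' w₀ w₁ hQc hQ'c hQi hQ'i hQ0 hQ1 hQ'0 hQ'1 hQQ' a b ha hab hb1
    -- the frontier of U is inside α
    have hfrα : frontier U ⊆ α := by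
      intro y hy
      have hyγ : y ∈ γ := by
        have := frontier_connectedComponentIn_subset hγcomp.isClosed.isOpen_compl z hy
        rwa [compl_compl] at this
      have hyclU : y ∈ closure U := hy.1
      rcases hyγ with ⟨s, hsI, rfl⟩ | hyQ'
      · by_cases hsab : s ∈ Icc a b
        · exfalso
          exact (hball (hQnear s hsab)) hyclU
        · rw [mem_Icc, not_and_or, not_le, not_le] at hsab
          rcases hsab with h | h
          · exact hQaα (mem_image_of_mem Q ⟨hsI.1, h.le⟩)
          · exact hQbα (mem_image_of_mem Q ⟨h.le, hsI.2⟩)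
      · exact hQ'α hyQ'
    -- the component of z in αᶜ is contained in U, hence bounded
    have hzα : z ∉ α := fun h => hzγ (hαγ h)
    have hCU : connectedComponentIn αᶜ z ⊆ U := by
      apply IsPreconnected.subset_left_of_subset_union hUopen
        (isClosed_closure (s := U)).isOpen_compl
        (disjoint_compl_right.mono_left subset_closure)
      · intro x hx
        have hxα : x ∉ α := connectedComponentIn_subset αᶜ z hx
        by_cases hxcl : x ∈ closure U
        · left
          have : x ∈ U ∪ frontier U := by
            rw [hUopen.frontier_eq]
            rcases (em (x ∈ U)) with h | h
            · exact Or.inl h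
            · exact Or.inr ⟨hxcl, h⟩
          rcases this with h | h
          · exact h
          · exact absurd (hfrα h) hxα
        · exact Or.inr hxcl
      · exact ⟨z, mem_connectedComponentIn hzα, hzU⟩
      · exact isPreconnected_connectedComponentIn
    have hCbdd : Bornology.IsBounded (connectedComponentIn αᶜ z) := hsurr.subset hCU
    exact not_hasLogOn_sub_of_bounded hαcomp hzα hCbdd (hαlog z hzγ)
  -- conclude : q lies in the component of z in Bᶜ
  have hqBc : q ∈ Bᶜ := hqB
  obtain ⟨ρ, hρ, hρball⟩ := Metric.isOpen_iff.mp hBcomp.isClosed.isOpen_compl q hqBc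
  obtain ⟨p, hpball, hpU⟩ := mem_closure_iff.mp hqclU (Metric.ball q ρ)
    Metric.isOpen_ball (Metric.mem_ball_self hρ)
  have hzD : z ∈ connectedComponentIn Bᶜ z := mem_connectedComponentIn hzB
  have hWpre : IsPreconnected (Metric.ball q ρ ∪ connectedComponentIn Bᶜ z) :=
    IsPreconnected.union' ⟨p, hpball, hUD hpU⟩ (convex_ball q ρ).isPreconnected
      isPreconnected_connectedComponentIn
  have hWsub : Metric.ball q ρ ∪ connectedComponentIn Bᶜ z ⊆ Bᶜ :=
    union_subset hρball (connectedComponentIn_subset _ _)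
  have hWD : Metric.ball q ρ ∪ connectedComponentIn Bᶜ z ⊆ connectedComponentIn Bᶜ z :=
    hWpre.subset_connectedComponentIn (Or.inr hzD) hWsub
  have hqD : q ∈ connectedComponentIn Bᶜ z := hWD (Or.inl (Metric.mem_ball_self hρ))
  rw [← connectedComponentIn_eq hqD]
  exact hP1bdd

end ThetaCurveMachinery

/-- The interior of a Jordan curve `S`: union of the bounded connected components
of the complement. -/
def jordanInterior (S : Set (ℝ × ℝ)) : Set (ℝ × ℝ) :=
  {x | x ∉ S ∧ Bornology.IsBounded (connectedComponentIn Sᶜ x)}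

/-- The exterior of a Jordan curve `S`: union of the unbounded connected components
of the complement. -/
def jordanExterior (S : Set (ℝ × ℝ)) : Set (ℝ × ℝ) :=
  {x | x ∉ S ∧ ¬ Bornology.IsBounded (connectedComponentIn Sᶜ x)}

/-- A self-avoiding circuit `γ = Q ∪ Q'` (two arcs sharing exactly their endpoints
`w₀ ≠ w₁`) surrounds the origin; a detour arc `P` with the same endpoints has its
interior in the exterior of `γ` and the circuit `P ∪ Q` does not surround the origin.
Then `(γ \ Q) ∪ P = P ∪ Q'` is a circuit surrounding the origin, and `Q` minus its
endpoints lies in the interior of the Jordan curve `P ∪ Q'`. -/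
theorem stmt7
    (Q Q' P : ℝ → ℝ × ℝ) (w₀ w₁ : ℝ × ℝ) (hw : w₀ ≠ w₁)
    (hQc : ContinuousOn Q (Icc 0 1)) (hQ'c : ContinuousOn Q' (Icc 0 1))
    (hPc : ContinuousOn P (Icc 0 1))
    (hQi : InjOn Q (Icc 0 1)) (hQ'i : InjOn Q' (Icc 0 1)) (hPi : InjOn P (Icc 0 1))
    (hQ0 : Q 0 = w₀) (hQ1 : Q 1 = w₁)
    (hQ'0 : Q' 0 = w₀) (hQ'1 : Q' 1 = w₁)
    (hP0 : P 0 = w₀) (hP1 : P 1 = w₁)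
    (hQQ' : Q '' (Icc 0 1) ∩ Q' '' (Icc 0 1) = {w₀, w₁})
    (hPQ : P '' (Icc 0 1) ∩ Q '' (Icc 0 1) = {w₀, w₁})
    (hPQ' : P '' (Icc 0 1) ∩ Q' '' (Icc 0 1) = {w₀, w₁})
    -- γ = Q ∪ Q' surrounds the origin
    (hsurr : ((0, 0) : ℝ × ℝ) ∈ jordanInterior (Q '' (Icc 0 1) ∪ Q' '' (Icc 0 1)))
    -- interior points of P lie in the exterior of γ
    (hPext : P '' (Icc 0 1) \ {w₀, w₁} ⊆
      jordanExterior (Q '' (Icc 0 1) ∪ Q' '' (Icc 0 1)))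
    -- the circuit P ∪ Q does not surround the origin
    (hnots : ((0, 0) : ℝ × ℝ) ∉ jordanInterior (P '' (Icc 0 1) ∪ Q '' (Icc 0 1)))
    (hnoton : ((0, 0) : ℝ × ℝ) ∉ P '' (Icc 0 1) ∪ Q '' (Icc 0 1)) :
    ((0, 0) : ℝ × ℝ) ∈ jordanInterior (P '' (Icc 0 1) ∪ Q' '' (Icc 0 1)) ∧
      Q '' (Icc 0 1) \ {w₀, w₁} ⊆ jordanInterior (P '' (Icc 0 1) ∪ Q' '' (Icc 0 1)) := by

  classical
  have hQim : (fun t => cplx (Q t)) '' (Icc 0 1) = cplx '' (Q '' Icc 0 1) := image_comp _ _ _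
  have hQ'im : (fun t => cplx (Q' t)) '' (Icc 0 1) = cplx '' (Q' '' Icc 0 1) := image_comp _ _ _
  have hPim : (fun t => cplx (P t)) '' (Icc 0 1) = cplx '' (P '' Icc 0 1) := image_comp _ _ _
  have hinj : Function.Injective (cplx : ℝ × ℝ → ℂ) := cplx.injective
  have hzA : ((0,0) : ℝ × ℝ) ∉ P '' (Icc 0 1) ∪ Q '' (Icc 0 1) := hnoton
  have hzγ : ((0,0) : ℝ × ℝ) ∉ Q '' (Icc 0 1) ∪ Q' '' (Icc 0 1) := hsurr.1
  have main := main_C (fun t => cplx (Q t)) (fun t => cplx (Q' t)) (fun t => cplx (P t))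
    (cplx w₀) (cplx w₁) (cplx ((0,0) : ℝ × ℝ))
    (cplx.continuous.comp_continuousOn hQc)
    (cplx.continuous.comp_continuousOn hQ'c)
    (cplx.continuous.comp_continuousOn hPc)
    (fun s hs t ht h => hQi hs ht (hinj h))
    (fun s hs t ht h => hQ'i hs ht (hinj h))
    (by show cplx (Q 0) = cplx w₀; rw [hQ0]) (by show cplx (Q 1) = cplx w₁; rw [hQ1])
    (by show cplx (Q' 0) = cplx w₀; rw [hQ'0]) (by show cplx (Q' 1) = cplx w₁; rw [hQ'1])
    (by show cplx (P 0) = cplx w₀; rw [hP0]) (by show cplx (P 1) = cplx w₁; rw [hP1])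
    (by rw [hQim, hQ'im, ← image_inter hinj, hQQ', image_pair])
    (by rw [hPim, hQim, ← image_inter hinj, hPQ, image_pair])
    (by rw [hPim, hQ'im, ← image_inter hinj, hPQ', image_pair])
    (by
      rw [hQim, hQ'im, ← image_union]
      rintro ⟨x, hx, hex⟩
      rw [hinj hex] at hx
      exact hzγ hx)
    (by
      rw [hQim, hQ'im, ← image_union]
      exact (cplx_bounded_ccIn_compl hzγ).mp hsurr.2)
    (by
      rw [hQim, hQ'im, hPim, ← image_union]
      rintro p ⟨⟨x, hxP, rfl⟩, hpw⟩
      have hxw : x ∉ ({w₀, w₁} : Set (ℝ × ℝ)) := by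
        rintro (rfl | rfl)
        · exact hpw (Or.inl rfl)
        · exact hpw (Or.inr rfl)
      have hxext := hPext ⟨hxP, hxw⟩
      intro hb
      exact hxext.2 ((cplx_bounded_ccIn_compl hxext.1).mpr hb))
    (by
      rw [hPim, hQim, ← image_union]
      rintro ⟨x, hx, hex⟩
      rw [hinj hex] at hx
      exact hzA hx)
    (by
      rw [hPim, hQim, ← image_union]
      intro hb
      exact hnots ⟨hzA, (cplx_bounded_ccIn_compl hzA).mpr hb⟩)
  obtain ⟨⟨-, hz2⟩, hpart2⟩ := main
  have hzB : ((0,0) : ℝ × ℝ) ∉ P '' (Icc 0 1) ∪ Q' '' (Icc 0 1) := by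
    rintro (h | h)
    · exact hzA (Or.inl h)
    · exact hzγ (Or.inr h)
  rw [hPim, hQ'im, ← image_union] at hz2 hpart2
  constructor
  · exact ⟨hzB, (cplx_bounded_ccIn_compl hzB).mpr hz2⟩
  · rintro q ⟨hqQ, hqw⟩
    have hqB : q ∉ P '' (Icc 0 1) ∪ Q' '' (Icc 0 1) := by
      rintro (h | h)
      · exact hqw (hPQ ▸ ⟨h, hqQ⟩)
      · exact hqw (hQQ' ▸ ⟨hqQ, h⟩)
    have hqmem : cplx q ∈ (fun t => cplx (Q t)) '' (Icc 0 1) \ {cplx w₀, cplx w₁} := by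
      constructor
      · rw [hQim]
        exact mem_image_of_mem _ hqQ
      · rintro (h | h)
        · exact hqw (Or.inl (hinj h))
        · rw [mem_singleton_iff] at h
          exact hqw (Or.inr (mem_singleton_iff.mpr (hinj h)))
    obtain ⟨-, hq2⟩ := hpart2 (cplx q) hqmem
    exact ⟨hqB, (cplx_bounded_ccIn_compl hqB).mpr hq2⟩
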